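/- Assume T(G) acts transitively on Y and let F : ℝ^X → ℝ^Y be a linear T-equivariant map. Then there exists a generalized T-permutant measure μ with F(φ) = Σ_{h ∈ X^Y} (φ ∘ h) μ(h) such that Σ_{h ∈ X^Y} |μ(h)| equals the operator norm of F with respect to the sup norms, i.e., max over nonzero φ of ‖F(φ)‖_∞ / ‖φ‖_∞. -/

import Mathlib

open Finset

lemma aux_sum_prod {X Y : Type*} [Fintype X] [Fintype Y] [DecidableEq Y]
    (w : Y → X → ℝ) (y : Y) (φ : X → ℝ) :
    ∑ h : Y → X, φ (h y) * ∏ y', w y' (h y')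
      = (∑ x, φ x * w y x) * ∏ y' ∈ Finset.univ.erase y, ∑ x, w y' x := by
  classical
  have key : ∀ h : Y → X, φ (h y) * ∏ y', w y' (h y')
      = ∏ y', ((if y' = y then φ (h y') else 1) * w y' (h y')) := by
    intro h
    rw [Finset.prod_mul_distrib, Finset.prod_ite_eq' Finset.univ y (fun y' => φ (h y'))]
    simp
  rw [Finset.sum_congr rfl fun h _ => key h]
  rw [← Fintype.piFinset_univ, ← Finset.prod_univ_sum
    (fun _ => Finset.univ) (fun y' x => (if y' = y then φ x else 1) * w y' x)]
  rw [← Finset.mul_prod_erase Finset.univ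
    (fun y' => ∑ x, (if y' = y then φ x else 1) * w y' x) (Finset.mem_univ y)]
  congr 1
  · simp
  · refine Finset.prod_congr rfl fun y' hy' => ?_
    have : y' ≠ y := Finset.ne_of_mem_erase hy'
    simp [this]

/-- If `T(G)` acts transitively on `Y` and `F` is a linear `T`-equivariant map,
then `F` is represented by a generalized `T`-permutant measure `μ` with
`Σ_h |μ(h)| = max_{φ ≠ 0} ‖F(φ)‖_∞ / ‖φ‖_∞` (the sup norms are the norms of
the finite product `Pi` types). -/
theorem stmt_8 {X Y : Type*} [Fintype X] [Fintype Y] [DecidableEq Y]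
    [Nonempty X] [Nonempty Y]
    (G : Subgroup (Equiv.Perm X)) (K : Subgroup (Equiv.Perm Y)) (T : G →* K)
    (htrans : ∀ y y' : Y, ∃ g : G, ((T g : K) : Equiv.Perm Y) y = y')
    (F : (X → ℝ) →ₗ[ℝ] (Y → ℝ))
    (hequiv : ∀ (g : G) (φ : X → ℝ),
      F (φ ∘ ⇑(g : Equiv.Perm X)) = F φ ∘ ⇑((T g : K) : Equiv.Perm Y)) :
    ∃ μ : (Y → X) → ℝ,
      (∀ (g : G) (h : Y → X),
        μ h = μ (⇑(g : Equiv.Perm X) ∘ h ∘ ⇑((T g⁻¹ : K) : Equiv.Perm Y))) ∧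
      (∀ φ : X → ℝ, F φ = fun y => ∑ h : Y → X, φ (h y) * μ h) ∧
      IsGreatest {r : ℝ | ∃ φ : X → ℝ, φ ≠ 0 ∧ r = ‖F φ‖ / ‖φ‖}
        (∑ h : Y → X, |μ h|) := by
  classical
  obtain ⟨y₀⟩ := ‹Nonempty Y›
  set c : Y → X → ℝ := fun y x => F (Pi.single x 1) y with hc
  -- representation of F via the matrix c
  have hrep : ∀ (φ : X → ℝ) (y : Y), F φ y = ∑ x, φ x * c y x := by
    intro φ y
    have hφ : φ = ∑ x, φ x • (Pi.single x (1:ℝ) : X → ℝ) := by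
      funext x'
      simp [Finset.sum_apply, Pi.single_apply]
    conv_lhs => rw [hφ, map_sum]
    simp [Finset.sum_apply, hc]
  -- equivariance of c
  have hceq : ∀ (g : G) (y : Y) (x : X),
      c (((T g : K) : Equiv.Perm Y) y) ((g : Equiv.Perm X) x) = c y x := by
    intro g y x
    have h1 : (Pi.single ((g : Equiv.Perm X) x) (1:ℝ)) ∘ ⇑(g : Equiv.Perm X)
        = Pi.single x 1 := by
      funext x'
      simp [Pi.single_apply, Function.comp, Equiv.apply_eq_iff_eq]
    have h2 := hequiv g (Pi.single ((g : Equiv.Perm X) x) 1)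
    rw [h1] at h2
    have h3 := congrFun h2 y
    simpa [hc, Function.comp] using h3.symm
  -- row sums are constant
  have hconst : ∀ (f : ℝ → ℝ) (y : Y), ∑ x, f (c y x) = ∑ x, f (c y₀ x) := by
    intro f y
    obtain ⟨g, hg⟩ := htrans y₀ y
    rw [← hg, ← Equiv.sum_comp (g : Equiv.Perm X)
      (fun x => f (c (((T g : K) : Equiv.Perm Y) y₀) x))]
    simp only [hceq]
  set n : ℕ := Fintype.card Y with hn
  have hn1 : 1 ≤ n := Fintype.card_pos
  set P : ℝ := ∑ x, max (c y₀ x) 0 with hPdef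
  set M : ℝ := ∑ x, max (-(c y₀ x)) 0 with hMdef
  have hPy : ∀ y, ∑ x, max (c y x) 0 = P := fun y => hconst (fun t => max t 0) y
  have hMy : ∀ y, ∑ x, max (-(c y x)) 0 = M := fun y => hconst (fun t => max (-t) 0) y
  have hPnn : 0 ≤ P := Finset.sum_nonneg fun x _ => le_max_right _ _
  have hMnn : 0 ≤ M := Finset.sum_nonneg fun x _ => le_max_right _ _
  have hP0 : P = 0 → ∀ y x, max (c y x) 0 = 0 := by
    intro h0 y x
    have := hPy y
    rw [h0] at this
    exact (Finset.sum_eq_zero_iff_of_nonneg fun x _ => le_max_right _ _).mp this x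
      (Finset.mem_univ x)
  have hM0 : M = 0 → ∀ y x, max (-(c y x)) 0 = 0 := by
    intro h0 y x
    have := hMy y
    rw [h0] at this
    exact (Finset.sum_eq_zero_iff_of_nonneg fun x _ => le_max_right _ _).mp this x
      (Finset.mem_univ x)
  set A : (Y → X) → ℝ := fun h => ∏ y, max (c y (h y)) 0 with hA
  set B : (Y → X) → ℝ := fun h => ∏ y, max (-(c y (h y))) 0 with hB
  set μ : (Y → X) → ℝ := fun h => A h / P ^ (n - 1) - B h / M ^ (n - 1) with hμ
  have hAnn : ∀ h, 0 ≤ A h := fun h => Finset.prod_nonneg fun y _ => le_max_right _ _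
  have hBnn : ∀ h, 0 ≤ B h := fun h => Finset.prod_nonneg fun y _ => le_max_right _ _
  -- the two supports are disjoint
  have hdisj : ∀ h, A h = 0 ∨ B h = 0 := by
    intro h
    by_cases hA0 : A h = 0
    · exact Or.inl hA0
    · right
      have hy : max (c y₀ (h y₀)) 0 ≠ 0 := by
        intro hz
        exact hA0 (Finset.prod_eq_zero (Finset.mem_univ y₀) hz)
      have hpos : 0 < c y₀ (h y₀) := by
        rcases lt_trichotomy (c y₀ (h y₀)) 0 with h' | h' | h'
        · exact absurd (max_eq_right h'.le) hy
        · exact absurd (by rw [h']; simp) hy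
        · exact h'
      exact Finset.prod_eq_zero (Finset.mem_univ y₀) (max_eq_right (by linarith))
  -- key sum identities
  have hsumA : ∀ (y : Y) (φ : X → ℝ),
      ∑ h : Y → X, φ (h y) * A h = (∑ x, φ x * max (c y x) 0) * P ^ (n - 1) := by
    intro y φ
    rw [hA]
    rw [aux_sum_prod (fun y x => max (c y x) 0) y φ]
    congr 1
    rw [Finset.prod_congr rfl fun y' _ => hPy y', Finset.prod_const,
      Finset.card_erase_of_mem (Finset.mem_univ y), Finset.card_univ]
  have hsumB : ∀ (y : Y) (φ : X → ℝ),
      ∑ h : Y → X, φ (h y) * B h = (∑ x, φ x * max (-(c y x)) 0) * M ^ (n - 1) := by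
    intro y φ
    rw [hB]
    rw [aux_sum_prod (fun y x => max (-(c y x)) 0) y φ]
    congr 1
    rw [Finset.prod_congr rfl fun y' _ => hMy y', Finset.prod_const,
      Finset.card_erase_of_mem (Finset.mem_univ y), Finset.card_univ]
  have hdivA : ∀ (y : Y) (φ : X → ℝ),
      (∑ x, φ x * max (c y x) 0) * P ^ (n - 1) / P ^ (n - 1)
        = ∑ x, φ x * max (c y x) 0 := by
    intro y φ
    by_cases hP : P = 0
    · have : ∀ x, φ x * max (c y x) 0 = 0 := fun x => by rw [hP0 hP y x, mul_zero]
      simp [Finset.sum_congr rfl fun x _ => this x]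
    · rw [mul_div_assoc, div_self (pow_ne_zero _ hP), mul_one]
  have hdivB : ∀ (y : Y) (φ : X → ℝ),
      (∑ x, φ x * max (-(c y x)) 0) * M ^ (n - 1) / M ^ (n - 1)
        = ∑ x, φ x * max (-(c y x)) 0 := by
    intro y φ
    by_cases hM : M = 0
    · have : ∀ x, φ x * max (-(c y x)) 0 = 0 := fun x => by rw [hM0 hM y x, mul_zero]
      simp [Finset.sum_congr rfl fun x _ => this x]
    · rw [mul_div_assoc, div_self (pow_ne_zero _ hM), mul_one]
  have hmaxsub : ∀ a : ℝ, max a 0 - max (-a) 0 = a := by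
    intro a
    rcases le_total a 0 with h | h
    · rw [max_eq_right h, max_eq_left (by linarith)]; ring
    · rw [max_eq_left h, max_eq_right (by linarith)]; ring
  have hmaxadd : ∀ a : ℝ, max a 0 + max (-a) 0 = |a| := by
    intro a
    rcases le_total a 0 with h | h
    · rw [max_eq_right h, max_eq_left (by linarith), abs_of_nonpos h]; ring
    · rw [max_eq_left h, max_eq_right (by linarith), abs_of_nonneg h]; ring
  -- representation conjunct
  have hrepμ : ∀ φ : X → ℝ, F φ = fun y => ∑ h : Y → X, φ (h y) * μ h := by
    intro φ
    funext y
    rw [hrep φ y]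
    have : ∀ h : Y → X, φ (h y) * μ h
        = φ (h y) * A h / P ^ (n - 1) - φ (h y) * B h / M ^ (n - 1) := by
      intro h; rw [hμ]; ring
    rw [Finset.sum_congr rfl fun h _ => this h, Finset.sum_sub_distrib,
      ← Finset.sum_div, ← Finset.sum_div, hsumA y φ, hsumB y φ, hdivA, hdivB,
      ← Finset.sum_sub_distrib]
    exact Finset.sum_congr rfl fun x _ => by rw [← mul_sub, hmaxsub]

  -- invariance
  have keyProd : ∀ (f : ℝ → ℝ) (g : G) (h : Y → X),
      (∏ y, f (c y ((⇑(g : Equiv.Perm X) ∘ h ∘ ⇑((T g⁻¹ : K) : Equiv.Perm Y)) y)))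
        = ∏ y, f (c y (h y)) := by
    intro f g h
    set e : Equiv.Perm Y := ((T g : K) : Equiv.Perm Y) with he
    have hcoe : ((T g⁻¹ : K) : Equiv.Perm Y) = e⁻¹ := by
      rw [he, map_inv]; simp
    simp only [Function.comp, hcoe]
    rw [← Equiv.prod_comp e
      (fun y => f (c y ((g : Equiv.Perm X) (h (e⁻¹ y)))))]
    refine Finset.prod_congr rfl fun y _ => ?_
    simp only [Equiv.Perm.inv_def, Equiv.symm_apply_apply]
    rw [he, hceq g y (h y)]
  have hinv : ∀ (g : G) (h : Y → X),
      μ h = μ (⇑(g : Equiv.Perm X) ∘ h ∘ ⇑((T g⁻¹ : K) : Equiv.Perm Y)) := by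
    intro g h
    have hAeq : A (⇑(g : Equiv.Perm X) ∘ h ∘ ⇑((T g⁻¹ : K) : Equiv.Perm Y)) = A h := by
      rw [hA]
      exact keyProd (fun t => max t 0) g h
    have hBeq : B (⇑(g : Equiv.Perm X) ∘ h ∘ ⇑((T g⁻¹ : K) : Equiv.Perm Y)) = B h := by
      rw [hB]
      exact keyProd (fun t => max (-t) 0) g h
    rw [hμ]
    simp only [hAeq, hBeq]
  -- value of the total variation
  have hPdiv : P * P ^ (n - 1) / P ^ (n - 1) = P := by
    by_cases hP : P = 0
    · simp [hP]
    · rw [mul_div_assoc, div_self (pow_ne_zero _ hP), mul_one]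
  have hMdiv : M * M ^ (n - 1) / M ^ (n - 1) = M := by
    by_cases hM : M = 0
    · simp [hM]
    · rw [mul_div_assoc, div_self (pow_ne_zero _ hM), mul_one]
  have habsμ : ∀ h, |μ h| = A h / P ^ (n - 1) + B h / M ^ (n - 1) := by
    intro h
    have hA' : 0 ≤ A h / P ^ (n - 1) := div_nonneg (hAnn h) (pow_nonneg hPnn _)
    have hB' : 0 ≤ B h / M ^ (n - 1) := div_nonneg (hBnn h) (pow_nonneg hMnn _)
    rcases hdisj h with h0 | h0
    · have h1 : μ h = -(B h / M ^ (n - 1)) := by rw [hμ]; simp [h0]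
      rw [h1, abs_neg, abs_of_nonneg hB', h0, zero_div, zero_add]
    · have h1 : μ h = A h / P ^ (n - 1) := by rw [hμ]; simp [h0]
      rw [h1, abs_of_nonneg hA', h0, zero_div, add_zero]
  have hsumabs : ∑ h : Y → X, |μ h| = P + M := by
    rw [Finset.sum_congr rfl fun h _ => habsμ h, Finset.sum_add_distrib,
      ← Finset.sum_div, ← Finset.sum_div]
    have h1 : ∑ h : Y → X, A h = P * P ^ (n - 1) := by
      have := hsumA y₀ (fun _ => 1)
      simp only [one_mul, ← hPdef] at this
      exact this
    have h2 : ∑ h : Y → X, B h = M * M ^ (n - 1) := by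
      have := hsumB y₀ (fun _ => 1)
      simp only [one_mul, ← hMdef] at this
      exact this
    rw [h1, h2, hPdiv, hMdiv]
  have hNy : ∀ y, ∑ x, |c y x| = P + M := by
    intro y
    rw [hconst abs y]
    calc ∑ x, |c y₀ x| = ∑ x, (max (c y₀ x) 0 + max (-(c y₀ x)) 0) :=
          Finset.sum_congr rfl fun x _ => (hmaxadd _).symm
      _ = P + M := by rw [Finset.sum_add_distrib, ← hPdef, ← hMdef]
  -- upper bound
  have hbound : ∀ φ : X → ℝ, ∀ y, |F φ y| ≤ ‖φ‖ * (P + M) := by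
    intro φ y
    rw [hrep φ y]
    calc |∑ x, φ x * c y x| ≤ ∑ x, |φ x * c y x| := Finset.abs_sum_le_sum_abs _ _
      _ ≤ ∑ x, ‖φ‖ * |c y x| := Finset.sum_le_sum fun x _ => by
          rw [abs_mul]
          exact mul_le_mul_of_nonneg_right
            (by rw [← Real.norm_eq_abs]; exact norm_le_pi_norm φ x) (abs_nonneg _)
      _ = ‖φ‖ * ∑ x, |c y x| := by rw [Finset.mul_sum]
      _ = ‖φ‖ * (P + M) := by rw [hNy y]
  have hub : ∀ r ∈ {r : ℝ | ∃ φ : X → ℝ, φ ≠ 0 ∧ r = ‖F φ‖ / ‖φ‖}, r ≤ P + M := by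
    rintro r ⟨φ, hφ, rfl⟩
    have hφn : 0 < ‖φ‖ := norm_pos_iff.mpr hφ
    rw [div_le_iff₀ hφn]
    have hNn : 0 ≤ (P + M) * ‖φ‖ := mul_nonneg (add_nonneg hPnn hMnn) hφn.le
    rw [pi_norm_le_iff_of_nonneg hNn]
    intro y
    rw [Real.norm_eq_abs]
    calc |F φ y| ≤ ‖φ‖ * (P + M) := hbound φ y
      _ = (P + M) * ‖φ‖ := mul_comm _ _
  -- membership
  have hmem : (P + M) ∈ {r : ℝ | ∃ φ : X → ℝ, φ ≠ 0 ∧ r = ‖F φ‖ / ‖φ‖} := by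
    by_cases hN : P + M = 0
    · have hc0 : ∀ y x, c y x = 0 := by
        intro y x
        have h0 : ∑ x, |c y x| = 0 := by rw [hNy y, hN]
        exact abs_eq_zero.mp
          ((Finset.sum_eq_zero_iff_of_nonneg fun x _ => abs_nonneg _).mp h0 x
            (Finset.mem_univ x))
      have hF0 : F (fun _ => (1:ℝ)) = 0 := by
        funext y
        rw [hrep]
        simp [hc0]
      refine ⟨fun _ => 1, ?_, ?_⟩
      · intro h0
        have := congrFun h0 (Classical.arbitrary X)
        simpa using this
      · rw [hN, hF0]; simp
    · set φ : X → ℝ := fun x => if 0 < c y₀ x then 1 else if c y₀ x < 0 then -1 else 0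
        with hφdef
      have hφc : ∀ x, φ x * c y₀ x = |c y₀ x| := by
        intro x
        rw [hφdef]
        dsimp only
        split_ifs with h1 h2
        · rw [abs_of_pos h1]; ring
        · rw [abs_of_neg h2]; ring
        · have h3 : c y₀ x = 0 := le_antisymm (not_lt.mp h1) (not_lt.mp h2)
          simp [h3]
      have hφle : ∀ x, |φ x| ≤ 1 := by
        intro x
        rw [hφdef]
        dsimp only
        split_ifs <;> simp
      have hex : ∃ x, c y₀ x ≠ 0 := by
        by_contra hno
        push_neg at hno
        apply hN
        rw [← hNy y₀]
        exact Finset.sum_eq_zero fun x _ => by rw [hno x]; simp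
      obtain ⟨x₀, hx₀⟩ := hex
      have hφx₀ : |φ x₀| = 1 := by
        rw [hφdef]
        dsimp only
        split_ifs with h1 h2
        · simp
        · simp
        · exact absurd (le_antisymm (not_lt.mp h1) (not_lt.mp h2)) hx₀
      have hφne : φ ≠ 0 := by
        intro h0
        have h1 : φ x₀ = 0 := congrFun h0 x₀
        rw [h1] at hφx₀
        norm_num at hφx₀
      have hφnorm : ‖φ‖ = 1 := by
        apply le_antisymm
        · rw [pi_norm_le_iff_of_nonneg zero_le_one]
          intro x
          rw [Real.norm_eq_abs]
          exact hφle x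
        · calc (1:ℝ) = |φ x₀| := hφx₀.symm
            _ = ‖φ x₀‖ := (Real.norm_eq_abs _).symm
            _ ≤ ‖φ‖ := norm_le_pi_norm φ x₀
      have hFφy₀ : F φ y₀ = P + M := by
        rw [hrep, Finset.sum_congr rfl fun x _ => hφc x, hNy y₀]
      have hFle : ‖F φ‖ ≤ P + M := by
        rw [pi_norm_le_iff_of_nonneg (add_nonneg hPnn hMnn)]
        intro y
        rw [Real.norm_eq_abs]
        calc |F φ y| ≤ ‖φ‖ * (P + M) := hbound φ y
          _ = P + M := by rw [hφnorm, one_mul]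
      have hFge : P + M ≤ ‖F φ‖ := by
        calc P + M = |F φ y₀| := by
              rw [hFφy₀, abs_of_nonneg (add_nonneg hPnn hMnn)]
          _ = ‖F φ y₀‖ := (Real.norm_eq_abs _).symm
          _ ≤ ‖F φ‖ := norm_le_pi_norm _ y₀
      exact ⟨φ, hφne, by rw [hφnorm, div_one]; exact (le_antisymm hFle hFge).symm⟩
  refine ⟨μ, hinv, hrepμ, ?_⟩
  rw [hsumabs]
  exact ⟨hmem, hub⟩
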